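/- For any set system 𝓕 ⊆ 2^[n] and any field 𝔽, identifying squarefree monomials with subsets of [n], one has Sh(𝓕) = ⋃_{≺ a term order} Sm_≺(I(𝓕)) = ⋃_{≺ a lex order} Sm_≺(I(𝓕)); that is, a set S ⊆ [n] is shattered by 𝓕 if and only if the monomial ∏_{i∈S} x_i is a standard monomial of I(𝓕) with respect to some lexicographic term order. -/

import Mathlib

open MvPolynomial

/-- Monomials of `𝔽[x_1,…,x_n]` identified with their exponent vectors. -/
abbrev Mon (n : ℕ) := Fin n →₀ ℕ

/-- A linear order on monomials is a term order if `1` (i.e. the zero exponent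
vector) is minimal and the order is compatible with multiplication by monomials. -/
def IsTermOrder {n : ℕ} (lin : LinearOrder (Mon n)) : Prop :=
  (∀ u : Mon n, lin.le 0 u) ∧
    ∀ u v w : Mon n, lin.le u v → lin.le (u + w) (v + w)

/-- The strict lexicographic comparison of exponent vectors induced by the variable
ordering `x_{σ 0} ≻ x_{σ 1} ≻ ⋯ ≻ x_{σ (n-1)}`. -/
def lexLt {n : ℕ} (σ : Equiv.Perm (Fin n)) (u v : Mon n) : Prop :=
  ∃ j : Fin n, u (σ j) < v (σ j) ∧ ∀ i : Fin n, i < j → u (σ i) = v (σ i)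

/-- `lin` is the lexicographic term order induced by the variable ordering
`x_{σ 0} ≻ x_{σ 1} ≻ ⋯ ≻ x_{σ (n-1)}`. -/
def IsLexOrder {n : ℕ} (σ : Equiv.Perm (Fin n)) (lin : LinearOrder (Mon n)) : Prop :=
  ∀ u v : Mon n, lin.lt u v ↔ lexLt σ u v

/-- `m` is the leading monomial of `f` with respect to the monomial order `lin`. -/
def IsLeadMon {n : ℕ} {F : Type*} [CommSemiring F] (lin : LinearOrder (Mon n))
    (f : MvPolynomial (Fin n) F) (m : Mon n) : Prop :=
  m ∈ f.support ∧ ∀ m' ∈ f.support, lin.le m' m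

/-- The set of standard monomials of an ideal `I` with respect to the monomial
order `lin`: monomials that are not the leading monomial of any nonzero `f ∈ I`. -/
def stdMon {n : ℕ} {F : Type*} [CommSemiring F] (lin : LinearOrder (Mon n))
    (I : Ideal (MvPolynomial (Fin n) F)) : Set (Mon n) :=
  { m | ¬ ∃ f ∈ I, f ≠ 0 ∧ IsLeadMon lin f m }

/-- The vanishing ideal of a point set `V ⊆ F^n`. -/
def vanishIdeal {n : ℕ} {F : Type*} [CommRing F] (V : Set (Fin n → F)) :
    Ideal (MvPolynomial (Fin n) F) where
  carrier := { f | ∀ v ∈ V, MvPolynomial.eval v f = 0 }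
  add_mem' := by
    intro a b ha hb v hv
    simp [map_add, ha v hv, hb v hv]
  zero_mem' := by intro v hv; simp
  smul_mem' := by
    intro c f hf v hv
    simp [smul_eq_mul, hf v hv]

/-- A finite point set (in `{0,…,k-1}^n`, over any field) is extremal if its vanishing
ideal has the same standard monomials for every lexicographic term order. -/
def IsExtremal {n : ℕ} {F : Type*} [CommRing F] (V : Set (Fin n → F)) : Prop :=
  ∀ (σ₁ σ₂ : Equiv.Perm (Fin n)) (lin₁ lin₂ : LinearOrder (Mon n)),
    IsLexOrder σ₁ lin₁ → IsLexOrder σ₂ lin₂ →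
      stdMon lin₁ (vanishIdeal V) = stdMon lin₂ (vanishIdeal V)

/-- Embedding of a point of `{0,…,k-1}^n` into `F^n`. -/
def toField {n k : ℕ} (F : Type*) [Field F] (w : Fin n → Fin k) : Fin n → F :=
  fun i => ((w i : ℕ) : F)

/-- Identification of a point of `{0,…,k-1}^n` with an exponent vector in `ℕ^n`. -/
noncomputable def toExp {n k : ℕ} (w : Fin n → Fin k) : Mon n :=
  Finsupp.equivFunOnFinite.symm fun i => (w i : ℕ)

/-- The downshift `D_i(V)` of `V ⊆ {0,…,k-1}^n` at coordinate `i`: its `i`-section at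
each choice of the other coordinates is `{0,1,…,m-1}` where `m` is the size of the
corresponding `i`-section of `V`. -/
def downshift {n k : ℕ} (V : Finset (Fin n → Fin k)) (i : Fin n) :
    Finset (Fin n → Fin k) :=
  Finset.univ.filter fun w =>
    (w i : ℕ) < (Finset.univ.filter fun α : Fin k => Function.update w i α ∈ V).card

/-- The iterated downshift `D_{σ(n-1)}(D_{σ(n-2)}(⋯(D_{σ 0}(V))))`,
i.e. downshifts are applied at coordinates `σ 0, σ 1, …, σ (n-1)` in this order. -/
def iterDownshift {n k : ℕ} (σ : Equiv.Perm (Fin n)) (V : Finset (Fin n → Fin k)) :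
    Finset (Fin n → Fin k) :=
  (List.ofFn fun j : Fin n => σ j).foldl downshift V

/-- A polynomial is degree dominated (with dominating term `x^w`) if it equals
`x^w + Σ αᵢ x^{vᵢ}` where each `x^{vᵢ}` divides `x^w`. -/
def IsDegDominated {n : ℕ} {F : Type*} [CommSemiring F]
    (f : MvPolynomial (Fin n) F) : Prop :=
  ∃ w : Mon n, MvPolynomial.coeff w f = 1 ∧ ∀ v ∈ f.support, v ≤ w

/-- `G` is a Gröbner basis of `I` with respect to the monomial order `lin`:
`G ⊆ I` and for every nonzero `f ∈ I` some `g ∈ G` has leading monomial dividing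
the leading monomial of `f` (divisibility of monomials being `≤` of exponents). -/
def IsGroebner {n : ℕ} {F : Type*} [CommSemiring F] (lin : LinearOrder (Mon n))
    (G : Finset (MvPolynomial (Fin n) F)) (I : Ideal (MvPolynomial (Fin n) F)) : Prop :=
  (∀ g ∈ G, g ∈ I) ∧
    ∀ f ∈ I, f ≠ 0 → ∀ m : Mon n, IsLeadMon lin f m →
      ∃ g ∈ G, ∃ mg : Mon n, IsLeadMon lin g mg ∧ mg ≤ m

/-- `G` is a universal Gröbner basis of `I` if it is a Gröbner basis for every term order. -/
def IsUnivGroebner {n : ℕ} {F : Type*} [CommSemiring F]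
    (G : Finset (MvPolynomial (Fin n) F)) (I : Ideal (MvPolynomial (Fin n) F)) : Prop :=
  ∀ lin : LinearOrder (Mon n), IsTermOrder lin → IsGroebner lin G I

/-- A term order is an elimination order with respect to `x_i` if `x_i` is greater
than every monomial not involving `x_i`. -/
def IsElimOrder {n : ℕ} (lin : LinearOrder (Mon n)) (i : Fin n) : Prop :=
  IsTermOrder lin ∧ ∀ m : Mon n, m i = 0 → lin.lt m (Finsupp.single i 1)

/-- A set system `𝓕` shatters `S` if every subset of `S` is the intersection of `S`
with a member of `𝓕`. -/
def Shatters {n : ℕ} (𝓕 : Finset (Finset (Fin n))) (S : Finset (Fin n)) : Prop :=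
  ∀ T ⊆ S, ∃ Fm ∈ 𝓕, Fm ∩ S = T

open scoped Classical in
/-- The family `Sh(𝓕)` of sets shattered by `𝓕`. -/
noncomputable def shatteredFamily {n : ℕ} (𝓕 : Finset (Finset (Fin n))) :
    Finset (Finset (Fin n)) :=
  Finset.univ.filter fun S => Shatters 𝓕 S

/-- A set system is shattering-extremal if it shatters exactly `|𝓕|` sets. -/
def IsSExtremal {n : ℕ} (𝓕 : Finset (Finset (Fin n))) : Prop :=
  (shatteredFamily 𝓕).card = 𝓕.card

/-- The characteristic vector of a set, as a point of `F^n`. -/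
def charVec {n : ℕ} (F : Type*) [Field F] (Fm : Finset (Fin n)) : Fin n → F :=
  fun i => if i ∈ Fm then 1 else 0

/-- The squarefree monomial `∏_{i ∈ S} x_i` associated to a set `S ⊆ [n]`,
as an exponent vector. -/
noncomputable def setMon {n : ℕ} (S : Finset (Fin n)) : Mon n :=
  Finsupp.equivFunOnFinite.symm fun i => if i ∈ S then 1 else 0

/-- The polynomial `f_{S,H} = (∏_{i∈H} x_i) ⬝ ∏_{i∈S∖H} (x_i - 1)`. -/
noncomputable def fSH {n : ℕ} (F : Type*) [Field F] (S H : Finset (Fin n)) :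
    MvPolynomial (Fin n) F :=
  (∏ i ∈ H, X i) * ∏ i ∈ S \ H, (X i - 1)

/-- The downshift `D_i(𝓕)` of a set system. -/
def dshiftSet {n : ℕ} (𝓕 : Finset (Finset (Fin n))) (i : Fin n) :
    Finset (Finset (Fin n)) :=
  𝓕.image (fun Fm => Fm.erase i) ∪ 𝓕.filter fun Fm => i ∈ Fm ∧ Fm.erase i ∈ 𝓕

/-- The iterated downshift `D_{σ(n-1)}(⋯(D_{σ 0}(𝓕)))` of a set system:
downshifts are applied at `σ 0, σ 1, …, σ (n-1)` in this order. -/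
def iterDshiftSet {n : ℕ} (σ : Equiv.Perm (Fin n)) (𝓕 : Finset (Finset (Fin n))) :
    Finset (Finset (Fin n)) :=
  (List.ofFn fun j : Fin n => σ j).foldl dshiftSet 𝓕

/-- Restriction of an exponent vector in `ℕ^{n+1}` to its first `n` coordinates. -/
noncomputable def restrictMon {n : ℕ} (w : Mon (n + 1)) : Mon n :=
  Finsupp.equivFunOnFinite.symm fun i => w i.castSucc

section Statement9Proof

variable {n : ℕ} {F : Type*} [Field F]

lemma setMon_apply (S : Finset (Fin n)) (j : Fin n) :
    setMon S j = if j ∈ S then 1 else 0 := by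
  simp [setMon]

lemma setMon_support (S : Finset (Fin n)) : (setMon S).support = S := by
  ext j
  rw [Finsupp.mem_support_iff, setMon_apply]
  split <;> simp_all

/-- In a term order, pointwise domination of exponent vectors implies `lin.le`. -/
lemma IsTermOrder.le_of_pointwise {lin : LinearOrder (Mon n)} (h : IsTermOrder lin)
    {u v : Mon n} (huv : ∀ i, u i ≤ v i) : lin.le u v := by
  have hkey : (v - u) + u = v := by
    ext i
    have := huv i
    simp only [Finsupp.add_apply, Finsupp.tsub_apply]
    omega
  have h2 := h.2 0 (v - u) u (h.1 (v - u))
  rwa [zero_add, hkey] at h2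

/-- Standard monomials of vanishing ideals of 0/1 point sets are squarefree. -/
lemma std_squarefree {lin : LinearOrder (Mon n)} (hlin : IsTermOrder lin)
    {V : Set (Fin n → F)} (hV : ∀ v ∈ V, ∀ i, v i = 0 ∨ v i = 1)
    {m : Mon n} (hm : m ∈ stdMon lin (vanishIdeal V)) (i : Fin n) : m i ≤ 1 := by
  by_contra hgt
  push_neg at hgt
  set u : Mon n := m - Finsupp.single i 2 with hu
  have key : u + Finsupp.single i 2 = m := by
    ext j
    rcases eq_or_ne i j with rfl | hne
    · simp only [hu, Finsupp.add_apply, Finsupp.tsub_apply, Finsupp.single_apply,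
        if_pos rfl, if_true]
      omega
    · simp only [hu, Finsupp.add_apply, Finsupp.tsub_apply, Finsupp.single_apply, if_neg hne]
      omega
  set f : MvPolynomial (Fin n) F := monomial u 1 * (X i ^ 2 - X i) with hfdef
  have hXi : (X i : MvPolynomial (Fin n) F) = monomial (Finsupp.single i 1) 1 := by
    rw [← X_pow_eq_monomial, pow_one]
  have hf : f = monomial m 1 - monomial (u + Finsupp.single i 1) 1 := by
    rw [hfdef, mul_sub, X_pow_eq_monomial, hXi, monomial_mul, monomial_mul, mul_one, key]
  have hne : u + Finsupp.single i 1 ≠ m := by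
    intro h
    have h1 := DFunLike.congr_fun h i
    have h2 := DFunLike.congr_fun key i
    simp only [Finsupp.add_apply, Finsupp.single_apply, if_pos rfl, if_true] at h1 h2
    omega
  have hcoeff : MvPolynomial.coeff m f = 1 := by
    rw [hf, coeff_sub, coeff_monomial, coeff_monomial, if_pos rfl, if_neg hne, sub_zero]
  refine hm ⟨f, ?_, ?_, ?_, ?_⟩
  · intro v hv
    have h0 : MvPolynomial.eval v (X i ^ 2 - X i : MvPolynomial (Fin n) F) = 0 := by
      rcases hV v hv i with h | h <;> simp [h]
    rw [hfdef, map_mul, h0, mul_zero]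
  · intro h0
    rw [h0, coeff_zero] at hcoeff
    exact one_ne_zero hcoeff.symm
  · exact MvPolynomial.mem_support_iff.mpr (by rw [hcoeff]; exact one_ne_zero)
  · intro v hv
    rw [hf] at hv
    have hv2 := MvPolynomial.support_sub (Fin n) _ _ hv
    rcases Finset.mem_union.mp hv2 with h | h
    · have hvm := Finset.mem_singleton.mp (MvPolynomial.support_monomial_subset h)
      rw [hvm]
      exact @le_refl _ lin.toPreorder m
    · have hvm := Finset.mem_singleton.mp (MvPolynomial.support_monomial_subset h)
      rw [hvm]
      refine hlin.le_of_pointwise fun j => ?_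
      have h2 := DFunLike.congr_fun key j
      rcases eq_or_ne i j with rfl | hij
      · simp only [Finsupp.add_apply, Finsupp.single_apply, if_pos rfl, if_true] at h2 ⊢
        omega
      · simp only [Finsupp.add_apply, Finsupp.single_apply, if_neg hij] at h2 ⊢
        omega

/-- Leading-coefficient and support facts for products of linear factors `xᵢ + cᵢ`. -/
lemma prod_linear (S : Finset (Fin n)) (c : Fin n → F) :
    MvPolynomial.coeff (setMon S) (∏ i ∈ S, (X i + C (c i))) = 1 ∧
      ∀ v ∈ (∏ i ∈ S, (X i + C (c i))).support, ∀ j, v j ≤ setMon S j := by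
  classical
  induction S using Finset.induction_on with
  | empty =>
    have h0 : setMon (∅ : Finset (Fin n)) = 0 := by ext j; simp [setMon_apply]
    constructor
    · rw [Finset.prod_empty, h0]; exact coeff_zero_one
    · intro v hv j
      rw [Finset.prod_empty, MvPolynomial.mem_support_iff, coeff_one] at hv
      split at hv
      · next h => rw [← h]; simp
      · exact absurd rfl hv
  | @insert a S ha ih =>
    rw [Finset.prod_insert ha]
    set P := ∏ i ∈ S, (X i + C (c i)) with hP
    have hmons : setMon (insert a S) = Finsupp.single a 1 + setMon S := by
      ext j
      rcases eq_or_ne a j with rfl | hne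
      · simp [setMon_apply, Finsupp.single_apply, ha]
      · simp [setMon_apply, Finsupp.single_apply, hne, Ne.symm hne]
    have htop : Finsupp.single a 1 + setMon S ∉ P.support := by
      intro hmem
      have h1 := ih.2 _ hmem a
      simp [setMon_apply, ha, Finsupp.add_apply, Finsupp.single_apply] at h1
    constructor
    · rw [hmons, add_mul, coeff_add, coeff_X_mul, ih.1, coeff_C_mul,
        MvPolynomial.notMem_support_iff.mp htop, mul_zero, add_zero]
    · intro v hv j
      rw [add_mul] at hv
      rcases Finset.mem_union.mp (MvPolynomial.support_add hv) with hv1 | hv2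
      · obtain ⟨x, hx, y, hy, rfl⟩ := Finset.mem_add.mp (MvPolynomial.support_mul _ _ hv1)
        rw [support_X, Finset.mem_singleton] at hx
        subst hx
        have := ih.2 y hy j
        rw [hmons]
        simp only [Finsupp.add_apply]
        omega
      · rw [C_mul'] at hv2
        have hy := MvPolynomial.support_smul hv2
        have := ih.2 v hy j
        rw [hmons]
        simp only [Finsupp.add_apply]
        omega

lemma fSH_eq (S T : Finset (Fin n)) (hT : T ⊆ S) :
    fSH F S T = ∏ i ∈ S, (X i + C (if i ∈ T then 0 else -1 : F)) := by
  classical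
  rw [fSH, ← Finset.prod_sdiff hT, mul_comm]
  congr 1
  · refine Finset.prod_congr rfl fun i hi => ?_
    rw [if_neg (Finset.mem_sdiff.mp hi).2]
    simp [sub_eq_add_neg]
  · refine Finset.prod_congr rfl fun i hi => ?_
    rw [if_pos hi]
    simp

lemma fSH_coeff (S T : Finset (Fin n)) (hT : T ⊆ S) :
    MvPolynomial.coeff (setMon S) (fSH F S T) = 1 := by
  rw [fSH_eq S T hT]; exact (prod_linear S _).1

lemma fSH_support (S T : Finset (Fin n)) (hT : T ⊆ S) :
    ∀ v ∈ (fSH F S T).support, ∀ j, v j ≤ setMon S j := by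
  rw [fSH_eq S T hT]; exact (prod_linear S _).2

lemma fSH_eval_eq_zero {S T : Finset (Fin n)} (hT : T ⊆ S) {Fm : Finset (Fin n)}
    (hne : Fm ∩ S ≠ T) : MvPolynomial.eval (charVec F Fm) (fSH F S T) = 0 := by
  classical
  rw [fSH, map_mul, map_prod, map_prod]
  by_cases hsub : T ⊆ Fm ∩ S
  · have hns : ¬(Fm ∩ S ⊆ T) := fun h => hne (Finset.Subset.antisymm h hsub)
    obtain ⟨i, hi, hiT⟩ := Finset.not_subset.mp hns
    have h0 : MvPolynomial.eval (charVec F Fm) (X i - 1 : MvPolynomial (Fin n) F) = 0 := by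
      simp [charVec, (Finset.mem_inter.mp hi).1]
    rw [Finset.prod_eq_zero (Finset.mem_sdiff.mpr ⟨(Finset.mem_inter.mp hi).2, hiT⟩) h0,
      mul_zero]
  · obtain ⟨i, hiT, hi⟩ := Finset.not_subset.mp hsub
    have hiF : i ∉ Fm := fun h => hi (Finset.mem_inter.mpr ⟨h, hT hiT⟩)
    have h0 : MvPolynomial.eval (charVec F Fm) (X i : MvPolynomial (Fin n) F) = 0 := by
      simp [charVec, hiF]
    rw [Finset.prod_eq_zero hiT h0, zero_mul]

/-- If the squarefree monomial of `S` is standard w.r.t. some term order,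
then `S` is shattered. -/
lemma shatters_of_std {lin : LinearOrder (Mon n)} (hlin : IsTermOrder lin)
    {𝓕 : Finset (Finset (Fin n))} {V : Set (Fin n → F)}
    (hVsub : ∀ v ∈ V, ∃ Fm ∈ 𝓕, v = charVec F Fm)
    {S : Finset (Fin n)} (hm : setMon S ∈ stdMon lin (vanishIdeal V)) :
    Shatters 𝓕 S := by
  intro T hT
  by_contra hno
  push_neg at hno
  refine hm ⟨fSH F S T, ?_, ?_, ?_, ?_⟩
  · intro v hv
    obtain ⟨Fm, hFm, rfl⟩ := hVsub v hv
    exact fSH_eval_eq_zero hT (hno Fm hFm)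
  · intro h0
    have := fSH_coeff (F := F) S T hT
    rw [h0, coeff_zero] at this
    exact one_ne_zero this.symm
  · exact MvPolynomial.mem_support_iff.mpr (by rw [fSH_coeff S T hT]; exact one_ne_zero)
  · intro v hv
    exact hlin.le_of_pointwise (fSH_support S T hT v hv)

lemma lexLt_trans {σ : Equiv.Perm (Fin n)} {a b c : Mon n}
    (h1 : lexLt σ a b) (h2 : lexLt σ b c) : lexLt σ a c := by
  obtain ⟨j₁, hlt₁, hpr₁⟩ := h1
  obtain ⟨j₂, hlt₂, hpr₂⟩ := h2
  rcases lt_trichotomy j₁ j₂ with h | rfl | h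
  · exact ⟨j₁, by rw [← hpr₂ j₁ h]; exact hlt₁,
      fun i hi => (hpr₁ i hi).trans (hpr₂ i (hi.trans h))⟩
  · exact ⟨j₁, hlt₁.trans hlt₂, fun i hi => (hpr₁ i hi).trans (hpr₂ i hi)⟩
  · exact ⟨j₂, by rw [hpr₁ j₂ h]; exact hlt₂,
      fun i hi => (hpr₁ i (hi.trans h)).trans (hpr₂ i hi)⟩

lemma lexLt_irrefl {σ : Equiv.Perm (Fin n)} {a : Mon n} : ¬ lexLt σ a a := by
  rintro ⟨j, hlt, -⟩
  exact lt_irrefl _ hlt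

lemma lexLt_trichotomous (σ : Equiv.Perm (Fin n)) (a b : Mon n) :
    lexLt σ a b ∨ a = b ∨ lexLt σ b a := by
  classical
  rcases eq_or_ne a b with rfl | hne
  · exact Or.inr (Or.inl rfl)
  · obtain ⟨i, hi⟩ := Finsupp.ne_iff.mp hne
    have hex : (Finset.univ.filter fun j : Fin n => a (σ j) ≠ b (σ j)).Nonempty := by
      refine ⟨σ.symm i, ?_⟩
      simp only [Finset.mem_filter, Finset.mem_univ, true_and, Equiv.apply_symm_apply]
      exact hi
    set j := (Finset.univ.filter fun j : Fin n => a (σ j) ≠ b (σ j)).min' hex with hj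
    have hjmem := (Finset.univ.filter fun j : Fin n => a (σ j) ≠ b (σ j)).min'_mem hex
    rw [Finset.mem_filter] at hjmem
    have hpr : ∀ i', i' < j → a (σ i') = b (σ i') := by
      intro i' hlt
      by_contra hcon
      refine absurd (Finset.min'_le _ i' ?_) (not_le.mpr hlt)
      simp only [Finset.mem_filter, Finset.mem_univ, true_and]
      exact hcon
    rcases lt_or_gt_of_ne hjmem.2 with h | h
    · exact Or.inl ⟨j, h, hpr⟩
    · exact Or.inr (Or.inr ⟨j, h, fun i' hi' => (hpr i' hi').symm⟩)

/-- The lexicographic linear order on monomials induced by a variable permutation. -/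
noncomputable def lexLin (σ : Equiv.Perm (Fin n)) : LinearOrder (Mon n) :=
  letI : DecidableRel (lexLt σ) := Classical.decRel _
  haveI : IsStrictTotalOrder (Mon n) (lexLt σ) :=
    { trichotomous := fun a b h1 h2 => (lexLt_trichotomous σ a b).elim (fun h => absurd h h1)
        (fun h => h.elim id (fun h => absurd h h2))
      irrefl := fun _ => lexLt_irrefl
      trans := fun _ _ _ => lexLt_trans }
  linearOrderOfSTO (lexLt σ)

lemma lexLin_isLex (σ : Equiv.Perm (Fin n)) : IsLexOrder σ (lexLin σ) :=
  fun _ _ => Iff.rfl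

lemma lexLt_of_ne {σ : Equiv.Perm (Fin n)} {lin : LinearOrder (Mon n)}
    (hlex : IsLexOrder σ lin) {u v : Mon n} (hle : lin.le u v) (hne : u ≠ v) :
    lexLt σ u v := by
  rw [← hlex u v]
  exact @lt_of_le_of_ne _ lin.toPartialOrder _ _ hle hne

lemma lex_isTermOrder {σ : Equiv.Perm (Fin n)} {lin : LinearOrder (Mon n)}
    (h : IsLexOrder σ lin) : IsTermOrder lin := by
  constructor
  · intro u
    rcases eq_or_ne u 0 with rfl | hne
    · exact @le_refl _ lin.toPreorder (0 : Mon n)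
    · refine @le_of_lt _ lin.toPreorder _ _ ((h 0 u).mpr ?_)
      classical
      have hex : (Finset.univ.filter fun j : Fin n => u (σ j) ≠ 0).Nonempty := by
        obtain ⟨i, hi⟩ := Finsupp.ne_iff.mp hne
        refine ⟨σ.symm i, ?_⟩
        simp only [Finset.mem_filter, Finset.mem_univ, true_and, Equiv.apply_symm_apply]
        simpa using hi
      set j := (Finset.univ.filter fun j : Fin n => u (σ j) ≠ 0).min' hex with hj
      have hjmem := (Finset.univ.filter fun j : Fin n => u (σ j) ≠ 0).min'_mem hex
      rw [Finset.mem_filter] at hjmem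
      refine ⟨j, ?_, ?_⟩
      · simp only [Finsupp.coe_zero, Pi.zero_apply]
        exact Nat.pos_of_ne_zero hjmem.2
      · intro i hij
        by_contra hne2
        have hmem : i ∈ Finset.univ.filter fun j : Fin n => u (σ j) ≠ 0 := by
          simp only [Finset.mem_filter, Finset.mem_univ, true_and]
          intro hcon
          exact hne2 (by simp [hcon])
        exact absurd (Finset.min'_le _ i hmem) (not_le.mpr hij)
  · intro u v w huv
    rcases eq_or_ne u v with rfl | hne
    · exact @le_refl _ lin.toPreorder _
    · obtain ⟨j, hlt, hj⟩ := lexLt_of_ne h huv hne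
      refine @le_of_lt _ lin.toPreorder _ _ ((h (u + w) (v + w)).mpr ⟨j, ?_, fun i hi => ?_⟩)
      · simp only [Finsupp.add_apply]
        exact Nat.add_lt_add_right hlt _
      · simp only [Finsupp.add_apply, hj i hi]

open scoped Classical in
/-- The list enumerating `Sᶜ` then `S`. -/
noncomputable def listS (S : Finset (Fin n)) : List (Fin n) :=
  (Sᶜ.sort (· ≤ ·)) ++ (S.sort (· ≤ ·))

open scoped Classical in
lemma listS_length (S : Finset (Fin n)) : (listS S).length = n := by
  simp only [listS, List.length_append, Finset.length_sort]
  rw [Finset.card_compl_add_card]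
  exact Fintype.card_fin n

open scoped Classical in
lemma listS_nodup (S : Finset (Fin n)) : (listS S).Nodup := by
  refine List.Nodup.append (Finset.sort_nodup _ _) (Finset.sort_nodup _ _) ?_
  intro a ha hb
  rw [Finset.mem_sort] at ha hb
  exact (Finset.mem_compl.mp ha) hb

open scoped Classical in
/-- The permutation listing the variables outside `S` first. -/
noncomputable def sigmaS (S : Finset (Fin n)) : Equiv.Perm (Fin n) :=
  Equiv.ofBijective (fun j => (listS S).get (Fin.cast (listS_length S).symm j))
    ((Finite.injective_iff_bijective).mp (fun a b hab => by
      have h2 := List.nodup_iff_injective_get.mp (listS_nodup S) hab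
      exact Fin.cast_injective _ (by exact h2)))

open scoped Classical in
lemma sigmaS_mem (S : Finset (Fin n)) (j : Fin n) :
    sigmaS S j ∈ S ↔ Sᶜ.card ≤ (j : ℕ) := by
  have hn : (j : ℕ) < (listS S).length := by rw [listS_length]; exact j.isLt
  have hval : sigmaS S j = (listS S)[(j : ℕ)]'hn := rfl
  rcases lt_or_ge (j : ℕ) ((Sᶜ.sort (· ≤ ·)).length) with hlt | hge
  · have heq : (listS S)[(j : ℕ)]'hn = (Sᶜ.sort (· ≤ ·))[(j : ℕ)]'hlt :=
      List.getElem_append_left hlt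
    have hmem : sigmaS S j ∈ Sᶜ := by
      rw [hval, heq, ← Finset.mem_sort (α := Fin n) (· ≤ ·)]
      exact List.getElem_mem _
    rw [Finset.mem_compl] at hmem
    rw [Finset.length_sort] at hlt
    simp only [hmem, false_iff, not_le]
    exact hlt
  · have h2 : (j : ℕ) - (Sᶜ.sort (· ≤ ·)).length < (S.sort (· ≤ ·)).length := by
      have h3 := listS_length S
      simp only [listS, List.length_append] at h3
      omega
    have heq : (listS S)[(j : ℕ)]'hn
        = (S.sort (· ≤ ·))[(j : ℕ) - (Sᶜ.sort (· ≤ ·)).length]'h2 :=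
      List.getElem_append_right hge
    have hmem : sigmaS S j ∈ S := by
      rw [hval, heq, ← Finset.mem_sort (α := Fin n) (· ≤ ·)]
      exact List.getElem_mem _
    rw [Finset.length_sort] at hge
    simp only [hmem, true_iff]
    exact hge

end Statement9Proof
section Statement9Proof2

variable {n : ℕ} {F : Type*} [Field F]

open scoped Classical in
/-- If `S` is shattered, `x_S` is standard for the lex order with `S`-variables last. -/
lemma std_of_shatters {𝓕 : Finset (Finset (Fin n))} {V : Set (Fin n → F)}
    (hVmem : ∀ Fm ∈ 𝓕, charVec F Fm ∈ V)
    {S : Finset (Fin n)} (hS : Shatters 𝓕 S) :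
    ∃ (σ : Equiv.Perm (Fin n)) (lin : LinearOrder (Mon n)),
      IsLexOrder σ lin ∧ setMon S ∈ stdMon lin (vanishIdeal V) := by
  set σ := sigmaS S with hσ
  refine ⟨σ, lexLin σ, lexLin_isLex σ, ?_⟩
  rintro ⟨f, hfI, hf0, hmem, hle⟩
  set lin := lexLin σ with hlin
  have hlex := lexLin_isLex σ
  set mS := setMon S with hmS
  -- values of mS
  have hmSval : ∀ j : Fin n, mS j = if j ∈ S then 1 else 0 := setMon_apply S
  -- Claim 1: every support exponent vanishes outside S
  have claim1 : ∀ v ∈ f.support, ∀ i, i ∉ S → v i = 0 := by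
    intro v hv i hiS
    rcases eq_or_ne v mS with rfl | hne
    · rw [hmSval i, if_neg hiS]
    · obtain ⟨j, hjlt, hjpr⟩ := lexLt_of_ne hlex (hle v hv) hne
      by_contra hvi
      have hj_in_S : σ j ∈ S := by
        by_contra hjS
        rw [hmSval (σ j), if_neg hjS] at hjlt
        omega
      have hjc : Sᶜ.card ≤ (j : ℕ) := (sigmaS_mem S j).mp hj_in_S
      set j' := σ.symm i with hj'
      have hσj' : σ j' = i := Equiv.apply_symm_apply σ i
      have hj'c : ¬ Sᶜ.card ≤ (j' : ℕ) := by
        intro hc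
        exact hiS (by rw [← hσj']; exact (sigmaS_mem S j').mpr hc)
      have hj'j : j' < j := by
        rw [Fin.lt_def]; omega
      have := hjpr j' hj'j
      rw [hσj', hmSval i, if_neg hiS] at this
      exact hvi this
  -- Claim 2: mS is the only support exponent with support containing S
  have claim2 : ∀ v ∈ f.support, v ≠ mS → ∃ i ∈ S, v i = 0 := by
    intro v hv hne
    obtain ⟨j, hjlt, _⟩ := lexLt_of_ne hlex (hle v hv) hne
    refine ⟨σ j, ?_, ?_⟩
    · by_contra hjS
      rw [hmSval (σ j), if_neg hjS] at hjlt
      omega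
    · have h1 : mS (σ j) ≤ 1 := by rw [hmSval (σ j)]; split <;> omega
      omega
  -- choose shattering witnesses
  choose Fm hFm hFmS using hS
  -- evaluation formula
  have heval : ∀ T : Finset (Fin n), ∀ hT : T ⊆ S,
      ∑ v ∈ f.support.filter (fun v => v.support ⊆ T), MvPolynomial.coeff v f = 0 := by
    intro T hT
    have h0 : MvPolynomial.eval (charVec F (Fm T hT)) f = 0 :=
      hfI _ (hVmem _ (hFm T hT))
    rw [MvPolynomial.eval_eq] at h0
    rw [Finset.sum_filter]
    refine (Finset.sum_congr rfl fun v hv => ?_).trans h0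
    have hprod : (∏ i ∈ v.support, charVec F (Fm T hT) i ^ v i)
        = if v.support ⊆ Fm T hT then 1 else 0 := by
      have hstep : (∏ i ∈ v.support, charVec F (Fm T hT) i ^ v i)
          = ∏ i ∈ v.support, (if i ∈ Fm T hT then 1 else 0 : F) := by
        refine Finset.prod_congr rfl fun i hi => ?_
        have hvi : v i ≠ 0 := Finsupp.mem_support_iff.mp hi
        show (if i ∈ Fm T hT then (1 : F) else 0) ^ v i = _
        split
        · rw [one_pow]
        · rw [zero_pow hvi]
      rw [hstep, Finset.prod_boole]
      by_cases hc : v.support ⊆ Fm T hT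
      · rw [if_pos hc, if_pos (fun i hi => hc hi)]
      · rw [if_neg hc, if_neg (fun hh => hc (fun i hi => hh i hi))]
    have hiff : v.support ⊆ Fm T hT ↔ v.support ⊆ T := by
      constructor
      · intro hsub i hi
        rw [← hFmS T hT]
        refine Finset.mem_inter.mpr ⟨hsub hi, ?_⟩
        by_contra hiS
        exact Finsupp.mem_support_iff.mp hi (claim1 v hv i hiS)
      · intro hsub i hi
        have : i ∈ Fm T hT ∩ S := by rw [hFmS T hT]; exact hsub hi
        exact (Finset.mem_inter.mp this).1
    rw [hprod]
    by_cases hc : v.support ⊆ T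
    · rw [if_pos hc, if_pos (hiff.mpr hc), mul_one]
    · rw [if_neg hc, if_neg (fun h => hc (hiff.mp h)), mul_zero]
  -- the zeta transform: d T = sum of coefficients with support exactly T
  set d : Finset (Fin n) → F :=
    fun A => ∑ v ∈ f.support.filter (fun v => v.support = A), MvPolynomial.coeff v f
    with hd
  have hzeta : ∀ T : Finset (Fin n), T ⊆ S →
      ∑ A ∈ T.powerset, d A = 0 := by
    intro T hT
    rw [← heval T hT]
    have hmaps : ∀ v ∈ f.support.filter (fun v => v.support ⊆ T),
        v.support ∈ T.powerset := by
      intro v hv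
      exact Finset.mem_powerset.mpr (Finset.mem_filter.mp hv).2
    rw [← Finset.sum_fiberwise_of_maps_to hmaps (fun v => MvPolynomial.coeff v f)]
    refine Finset.sum_congr rfl fun A hA => ?_
    refine Finset.sum_congr ?_ fun _ _ => rfl
    rw [Finset.filter_filter]
    refine Finset.filter_congr fun v hv => ?_
    constructor
    · intro hEq
      exact ⟨hEq ▸ Finset.mem_powerset.mp hA, hEq⟩
    · exact And.right
  have hdzero : ∀ T : Finset (Fin n), T ⊆ S → d T = 0 := by
    intro T
    induction T using Finset.strongInduction with
    | _ T ih =>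
      intro hTS
      have h0 := hzeta T hTS
      rw [← Finset.add_sum_erase _ _ (Finset.mem_powerset_self T)] at h0
      have hrest : ∑ A ∈ T.powerset.erase T, d A = 0 := by
        refine Finset.sum_eq_zero fun A hA => ?_
        have hA' := Finset.mem_erase.mp hA
        have hsub : A ⊆ T := Finset.mem_powerset.mp hA'.2
        exact ih A (Finset.ssubset_iff_subset_ne.mpr ⟨hsub, hA'.1⟩) (hsub.trans hTS)
      rw [hrest, add_zero] at h0
      exact h0
  have hdS := hdzero S (subset_refl S)
  -- but d S = coeff mS f ≠ 0
  have hfilter : f.support.filter (fun v => v.support = S) = {mS} := by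
    ext v
    constructor
    · intro hv'
      obtain ⟨hv, hvs⟩ := Finset.mem_filter.mp hv'
      rw [Finset.mem_singleton]
      by_contra hne
      obtain ⟨i, hiS, hvi⟩ := claim2 v hv hne
      rw [← hvs] at hiS
      exact Finsupp.mem_support_iff.mp hiS hvi
    · intro hv'
      rw [Finset.mem_singleton] at hv'
      subst hv'
      exact Finset.mem_filter.mpr ⟨hmem, setMon_support S⟩
  rw [hd] at hdS
  simp only [hfilter, Finset.sum_singleton] at hdS
  exact MvPolynomial.mem_support_iff.mp hmem hdS

end Statement9Proof2
open scoped Classical in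
/-- For any set system `𝓕 ⊆ 2^[n]` and field `𝔽`, identifying squarefree monomials with
subsets of `[n]`, `Sh(𝓕)` equals the union of `Sm(I(𝓕))` over all term orders, which
equals the union over all lex orders. -/
theorem shattered_eq_union_stdMon {n : ℕ} {F : Type*} [Field F]
    (𝓕 : Finset (Finset (Fin n))) :
    ({m : Mon n | ∃ S : Finset (Fin n), Shatters 𝓕 S ∧ m = setMon S} =
      {m : Mon n | ∃ lin : LinearOrder (Mon n), IsTermOrder lin ∧
        m ∈ stdMon lin (vanishIdeal ((𝓕.image (charVec F) : Finset (Fin n → F)) :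
          Set (Fin n → F)))}) ∧
    ({m : Mon n | ∃ S : Finset (Fin n), Shatters 𝓕 S ∧ m = setMon S} =
      {m : Mon n | ∃ (σ : Equiv.Perm (Fin n)) (lin : LinearOrder (Mon n)),
        IsLexOrder σ lin ∧
        m ∈ stdMon lin (vanishIdeal ((𝓕.image (charVec F) : Finset (Fin n → F)) :
          Set (Fin n → F)))}) := by
  set V : Set (Fin n → F) := ((𝓕.image (charVec F) : Finset (Fin n → F)) :
    Set (Fin n → F)) with hV
  have hVmem : ∀ Fm ∈ 𝓕, charVec F Fm ∈ V := by
    intro Fm hFm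
    rw [hV]
    simp only [Finset.coe_image, Set.mem_image, Finset.mem_coe]
    exact ⟨Fm, hFm, rfl⟩
  have hVsub : ∀ v ∈ V, ∃ Fm ∈ 𝓕, v = charVec F Fm := by
    intro v hv
    rw [hV] at hv
    simp only [Finset.coe_image, Set.mem_image, Finset.mem_coe] at hv
    obtain ⟨Fm, hFm, rfl⟩ := hv
    exact ⟨Fm, hFm, rfl⟩
  have hV01 : ∀ v ∈ V, ∀ i, v i = 0 ∨ v i = 1 := by
    intro v hv i
    obtain ⟨Fm, _, rfl⟩ := hVsub v hv
    rw [charVec]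
    split
    · right; rfl
    · left; rfl
  have h1 : {m : Mon n | ∃ S : Finset (Fin n), Shatters 𝓕 S ∧ m = setMon S} ⊆
      {m : Mon n | ∃ (σ : Equiv.Perm (Fin n)) (lin : LinearOrder (Mon n)),
        IsLexOrder σ lin ∧ m ∈ stdMon lin (vanishIdeal V)} := by
    rintro m ⟨S, hS, rfl⟩
    obtain ⟨σ, lin, hlex, hstd⟩ := std_of_shatters hVmem hS
    exact ⟨σ, lin, hlex, hstd⟩
  have h2 : {m : Mon n | ∃ (σ : Equiv.Perm (Fin n)) (lin : LinearOrder (Mon n)),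
        IsLexOrder σ lin ∧ m ∈ stdMon lin (vanishIdeal V)} ⊆
      {m : Mon n | ∃ lin : LinearOrder (Mon n), IsTermOrder lin ∧
        m ∈ stdMon lin (vanishIdeal V)} := by
    rintro m ⟨σ, lin, hlex, hstd⟩
    exact ⟨lin, lex_isTermOrder hlex, hstd⟩
  have h3 : {m : Mon n | ∃ lin : LinearOrder (Mon n), IsTermOrder lin ∧
        m ∈ stdMon lin (vanishIdeal V)} ⊆
      {m : Mon n | ∃ S : Finset (Fin n), Shatters 𝓕 S ∧ m = setMon S} := by
    rintro m ⟨lin, hterm, hstd⟩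
    have hsq : ∀ i, m i ≤ 1 := fun i => std_squarefree hterm hV01 hstd i
    have hmeq : m = setMon m.support := by
      ext j
      rw [setMon_apply]
      split
      · rename_i hj
        have := Finsupp.mem_support_iff.mp hj
        have := hsq j
        omega
      · rename_i hj
        exact Finsupp.notMem_support_iff.mp hj
    refine ⟨m.support, ?_, hmeq⟩
    rw [hmeq] at hstd
    exact shatters_of_std hterm hVsub hstd
  exact ⟨Set.Subset.antisymm (h1.trans h2) h3, Set.Subset.antisymm h1 (h2.trans h3)⟩
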